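/- Let Y₁ and Y₂ be independent real random variables on a common probability space such that (Y₁)_{n,λ} and (Y₂)_{n,λ} are integrable for every n ≥ 0. Then for every integer n ≥ 0 and all real x, y: S^{Y₁+Y₂}_{n,λ}(x+y) = Σ_{k=0}^{n} C(n,k)·S^{Y₁}_{k,λ}(x)·S^{Y₂}_{n−k,λ}(y). -/

import Mathlib

open Finset PowerSeries

noncomputable def dff (lam x : ℝ) (n : ℕ) : ℝ := ∏ i ∈ Finset.range n, (x - i * lam)

noncomputable def degExp (lam x : ℝ) : PowerSeries ℝ :=
  PowerSeries.mk fun k => dff lam x k / k.factorial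

open MeasureTheory

lemma dff_zero (lam c : ℝ) : dff lam c 0 = 1 := by simp [dff]

lemma dff_succ (lam c : ℝ) (n : ℕ) : dff lam c (n + 1) = dff lam c n * (c - n * lam) := by
  simp [dff, Finset.prod_range_succ]

lemma dff_measurable (lam : ℝ) (n : ℕ) : Measurable fun t : ℝ => dff lam t n := by
  unfold dff
  exact Finset.measurable_prod _ fun i _ => measurable_id.sub_const _

lemma dff_vandermonde (lam a b : ℝ) (n : ℕ) :
    dff lam (a + b) n =
      ∑ k ∈ Finset.range (n + 1), (n.choose k : ℝ) * dff lam a k * dff lam b (n - k) := by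
  induction n with
  | zero => simp [dff]
  | succ n ih =>
    have key : ∀ k ∈ Finset.range (n + 1),
        (n.choose k : ℝ) * dff lam a k * dff lam b (n - k) * (a + b - n * lam)
          = (n.choose k : ℝ) * dff lam a (k + 1) * dff lam b (n - k)
            + (n.choose k : ℝ) * dff lam a k * dff lam b (n - k + 1) := by
      intro k hk
      have hk' : k ≤ n := Nat.lt_succ_iff.mp (Finset.mem_range.mp hk)
      have hcast : ((n - k : ℕ) : ℝ) = (n : ℝ) - k := by
        rw [Nat.cast_sub hk']
      rw [dff_succ, dff_succ, hcast]
      ring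
    rw [dff_succ, ih, Finset.sum_mul, Finset.sum_congr rfl key, Finset.sum_add_distrib]
    have h2 : ∀ k ∈ Finset.range (n + 1),
        (n.choose k : ℝ) * dff lam a k * dff lam b (n - k + 1)
          = (n.choose k : ℝ) * dff lam a k * dff lam b (n + 1 - k) := by
      intro k hk
      have hk' : k ≤ n := Nat.lt_succ_iff.mp (Finset.mem_range.mp hk)
      rw [Nat.sub_add_comm hk']
    rw [Finset.sum_congr rfl h2]
    rw [Finset.sum_range_succ'
      (fun k => ((n+1).choose k : ℝ) * dff lam a k * dff lam b (n + 1 - k)) (n+1)]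
    simp only [Nat.choose_succ_succ, Nat.cast_add, Nat.choose_zero_right, Nat.cast_one,
      dff_zero, Nat.sub_zero]
    rw [Finset.sum_range_succ'
      (fun k => ((n).choose k : ℝ) * dff lam a k * dff lam b (n + 1 - k)) n]
    simp only [Nat.choose_zero_right, Nat.cast_one, dff_zero, Nat.sub_zero]
    have h3 : ∀ i ∈ Finset.range (n + 1),
        ((n.choose i : ℝ) + (n.choose (i+1) : ℝ)) * dff lam a (i+1) * dff lam b (n + 1 - (i+1))
          = (n.choose i : ℝ) * dff lam a (i+1) * dff lam b (n - i)
            + (n.choose (i+1) : ℝ) * dff lam a (i+1) * dff lam b (n + 1 - (i+1)) := by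
      intro i hi
      have : n + 1 - (i + 1) = n - i := by omega
      rw [this]; ring
    rw [Finset.sum_congr rfl h3, Finset.sum_add_distrib]
    have h4 : ∑ i ∈ Finset.range (n + 1),
        (n.choose (i+1) : ℝ) * dff lam a (i+1) * dff lam b (n + 1 - (i+1))
          = ∑ i ∈ Finset.range n,
        (n.choose (i+1) : ℝ) * dff lam a (i+1) * dff lam b (n + 1 - (i+1)) := by
      rw [Finset.sum_range_succ, Nat.choose_succ_self, Nat.cast_zero, zero_mul, zero_mul, add_zero]
    rw [h4]
    ring

/-- If `h` is the binomial convolution of `f` and `g`, the exponential generating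
series multiply. -/
lemma egf_conv (f g h : ℕ → ℝ)
    (hc : ∀ n, h n = ∑ k ∈ Finset.range (n+1), (n.choose k : ℝ) * f k * g (n - k)) :
    (PowerSeries.mk fun n => h n / n.factorial)
      = (PowerSeries.mk fun n => f n / n.factorial) *
        (PowerSeries.mk fun n => g n / n.factorial) := by
  ext n
  rw [PowerSeries.coeff_mk, PowerSeries.coeff_mul, Finset.Nat.sum_antidiagonal_eq_sum_range_succ
    (fun i j => (PowerSeries.coeff i) (PowerSeries.mk fun n => f n / n.factorial) *
      (PowerSeries.coeff j) (PowerSeries.mk fun n => g n / n.factorial))]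
  simp only [PowerSeries.coeff_mk]
  rw [hc, Finset.sum_div]
  refine Finset.sum_congr rfl fun k hk => ?_
  have hk' : k ≤ n := Nat.lt_succ_iff.mp (Finset.mem_range.mp hk)
  have hfac : (n.factorial : ℝ) = (n.choose k : ℝ) * k.factorial * (n - k).factorial := by
    rw_mod_cast [← Nat.choose_mul_factorial_mul_factorial hk']
  have h1 : (k.factorial : ℝ) ≠ 0 := Nat.cast_ne_zero.mpr (Nat.factorial_ne_zero k)
  have h2 : ((n-k).factorial : ℝ) ≠ 0 := Nat.cast_ne_zero.mpr (Nat.factorial_ne_zero _)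
  have h3 : (n.factorial : ℝ) ≠ 0 := Nat.cast_ne_zero.mpr (Nat.factorial_ne_zero n)
  have h4 : (n.choose k : ℝ) ≠ 0 := Nat.cast_ne_zero.mpr (Nat.choose_pos hk').ne'
  field_simp [hfac]
  rw [hfac]; ring

theorem stmt10 (lam : ℝ) (hlam : lam ≠ 0)
    {Ω : Type*} [MeasurableSpace Ω] (μ : Measure Ω) [IsProbabilityMeasure μ]
    (Y₁ Y₂ : Ω → ℝ) (hY₁m : Measurable Y₁) (hY₂m : Measurable Y₂)
    (hindep : ProbabilityTheory.IndepFun Y₁ Y₂ μ)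
    (hY₁ : ∀ n : ℕ, Integrable (fun ω => dff lam (Y₁ ω) n) μ)
    (hY₂ : ∀ n : ℕ, Integrable (fun ω => dff lam (Y₂ ω) n) μ)
    (S₁ S₂ S₁₂ : ℝ → ℕ → ℝ)
    (hS₁ : ∀ x, (PowerSeries.mk fun n => S₁ x n / n.factorial) *
        (PowerSeries.mk fun n => (∫ ω, dff lam (Y₁ ω) n ∂μ) / n.factorial) = degExp lam x)
    (hS₂ : ∀ x, (PowerSeries.mk fun n => S₂ x n / n.factorial) *
        (PowerSeries.mk fun n => (∫ ω, dff lam (Y₂ ω) n ∂μ) / n.factorial) = degExp lam x)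
    (hS₁₂ : ∀ x, (PowerSeries.mk fun n => S₁₂ x n / n.factorial) *
        (PowerSeries.mk fun n => (∫ ω, dff lam (Y₁ ω + Y₂ ω) n ∂μ) / n.factorial)
          = degExp lam x)
    (n : ℕ) (x y : ℝ) :
    S₁₂ (x + y) n = ∑ k ∈ Finset.range (n + 1), (n.choose k : ℝ) * S₁ x k * S₂ y (n - k) := by
  -- independence of the transformed variables
  have hind : ∀ k m : ℕ, ProbabilityTheory.IndepFun
      (fun ω => dff lam (Y₁ ω) k) (fun ω => dff lam (Y₂ ω) m) μ :=
    fun k m => hindep.comp (dff_measurable lam k) (dff_measurable lam m)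
  -- the moments of the sum are the binomial convolution of the moments
  have hmom : ∀ m : ℕ, (∫ ω, dff lam (Y₁ ω + Y₂ ω) m ∂μ)
      = ∑ k ∈ Finset.range (m+1),
          (m.choose k : ℝ) * (∫ ω, dff lam (Y₁ ω) k ∂μ) * (∫ ω, dff lam (Y₂ ω) (m-k) ∂μ) := by
    intro m
    have hint : ∀ k ∈ Finset.range (m+1), Integrable
        (fun ω => (m.choose k : ℝ) * (dff lam (Y₁ ω) k * dff lam (Y₂ ω) (m-k))) μ := by
      intro k _
      exact (((hind k (m-k)).integrable_mul (hY₁ k) (hY₂ (m-k)))).const_mul _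
    calc (∫ ω, dff lam (Y₁ ω + Y₂ ω) m ∂μ)
        = ∫ ω, ∑ k ∈ Finset.range (m+1),
            (m.choose k : ℝ) * (dff lam (Y₁ ω) k * dff lam (Y₂ ω) (m-k)) ∂μ := by
          refine integral_congr_ae (Filter.Eventually.of_forall fun ω => ?_)
          dsimp only
          rw [dff_vandermonde]
          exact Finset.sum_congr rfl fun k _ => by ring
      _ = ∑ k ∈ Finset.range (m+1),
            ∫ ω, (m.choose k : ℝ) * (dff lam (Y₁ ω) k * dff lam (Y₂ ω) (m-k)) ∂μ :=
          integral_finset_sum _ hint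
      _ = ∑ k ∈ Finset.range (m+1),
            (m.choose k : ℝ) * (∫ ω, dff lam (Y₁ ω) k ∂μ) * (∫ ω, dff lam (Y₂ ω) (m-k) ∂μ) := by
          refine Finset.sum_congr rfl fun k _ => ?_
          rw [integral_const_mul, (hind k (m-k)).integral_fun_mul_eq_mul_integral
            (hY₁ k).aestronglyMeasurable (hY₂ (m-k)).aestronglyMeasurable]
          ring
  -- power series of the moments multiply
  have hM : (PowerSeries.mk fun m => (∫ ω, dff lam (Y₁ ω + Y₂ ω) m ∂μ) / m.factorial)
      = (PowerSeries.mk fun m => (∫ ω, dff lam (Y₁ ω) m ∂μ) / m.factorial) *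
        (PowerSeries.mk fun m => (∫ ω, dff lam (Y₂ ω) m ∂μ) / m.factorial) :=
    egf_conv _ _ _ hmom
  -- degenerate exponentials multiply
  have hE : degExp lam (x + y) = degExp lam x * degExp lam y :=
    egf_conv _ _ _ (dff_vandermonde lam x y)
  -- cancel the (nonzero) moment series
  have hMne : (PowerSeries.mk fun m => (∫ ω, dff lam (Y₁ ω + Y₂ ω) m ∂μ) / m.factorial) ≠ 0 := by
    intro h0
    have : (PowerSeries.coeff 0)
        (PowerSeries.mk fun m => (∫ ω, dff lam (Y₁ ω + Y₂ ω) m ∂μ) / m.factorial) = 0 := by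
      rw [h0]; simp
    rw [PowerSeries.coeff_mk] at this
    simp [dff_zero] at this
  have hkey : (PowerSeries.mk fun m => S₁₂ (x+y) m / m.factorial)
      = (PowerSeries.mk fun m => S₁ x m / m.factorial) *
        (PowerSeries.mk fun m => S₂ y m / m.factorial) := by
    apply mul_right_cancel₀ hMne
    rw [hS₁₂ (x+y), hE, ← hS₁ x, ← hS₂ y, hM]
    ring
  -- extract coefficient n
  have hco := congrArg (PowerSeries.coeff n) hkey
  rw [PowerSeries.coeff_mk, PowerSeries.coeff_mul, Finset.Nat.sum_antidiagonal_eq_sum_range_succ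
    (fun i j => (PowerSeries.coeff i) (PowerSeries.mk fun m => S₁ x m / m.factorial) *
      (PowerSeries.coeff j) (PowerSeries.mk fun m => S₂ y m / m.factorial))] at hco
  simp only [PowerSeries.coeff_mk] at hco
  have h3 : (n.factorial : ℝ) ≠ 0 := Nat.cast_ne_zero.mpr (Nat.factorial_ne_zero n)
  have := congrArg (fun r : ℝ => (n.factorial : ℝ) * r) hco
  rw [mul_div_cancel₀ _ h3, Finset.mul_sum] at this
  rw [this]
  refine Finset.sum_congr rfl fun k hk => ?_
  have hk' : k ≤ n := Nat.lt_succ_iff.mp (Finset.mem_range.mp hk)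
  have hfac : (n.factorial : ℝ) = (n.choose k : ℝ) * k.factorial * (n - k).factorial := by
    rw_mod_cast [← Nat.choose_mul_factorial_mul_factorial hk']
  have h1 : (k.factorial : ℝ) ≠ 0 := Nat.cast_ne_zero.mpr (Nat.factorial_ne_zero k)
  have h2 : ((n-k).factorial : ℝ) ≠ 0 := Nat.cast_ne_zero.mpr (Nat.factorial_ne_zero _)
  rw [hfac]
  field_simp
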